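/- Binary choice posterior variance (Stage 2): In the setting of the previous statement, for t ≥ t₁* = (Σ₁₁ − Σ₂₂)/det(Σ), under the optimal strategy (full attention to θ₁ until t₁*, then equal split), the posterior variance of ω = θ₁ + θ₂ at time t equals 4·det(Σ)/(Σ₁₁ + Σ₂₂ − 2Σ₁₂ + det(Σ)·t). -/

import Mathlib

open Matrix

theorem stmt_17 (S : Matrix (Fin 2) (Fin 2) ℝ) (hS : S.PosDef)
    (hord : S 1 1 ≤ S 0 0) (t : ℝ)
    (ht : (S 0 0 - S 1 1) / S.det ≤ t) :
    (![1, 1] : Fin 2 → ℝ) ⬝ᵥ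
      ((S⁻¹ + diagonal ![(t + (S 0 0 - S 1 1) / S.det) / 2,
                         (t - (S 0 0 - S 1 1) / S.det) / 2])⁻¹ *ᵥ ![1, 1]) =
      4 * S.det / (S 0 0 + S 1 1 - 2 * S 0 1 + S.det * t) := by
  have hdet : 0 < S.det := hS.det_pos
  have hr : S 1 0 = S 0 1 := by
    have h := congrFun (congrFun hS.1 1) 0
    simpa [Matrix.conjTranspose_apply] using h.symm
  -- a ≥ 0
  have ha : 0 ≤ (S 0 0 - S 1 1) / S.det := div_nonneg (by linarith) hdet.le
  have ht0 : 0 ≤ t := le_trans ha ht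
  -- quadratic form positivity with vector (1, -1)
  have hq : 0 < S 0 0 + S 1 1 - 2 * S 0 1 := by
    have hne : (![1, -1] : Fin 2 → ℝ) ≠ 0 := by
      intro h; have := congrFun h 0; simp at this
    have h := hS.dotProduct_mulVec_pos hne
    have heq : (star (![1, -1] : Fin 2 → ℝ)) ⬝ᵥ (S *ᵥ ![1, -1])
        = S 0 0 + S 1 1 - 2 * S 0 1 := by
      simp [Matrix.mulVec, dotProduct, Fin.sum_univ_two, hr]
      ring
    rw [heq] at h; exact h
  have hden : 0 < S 0 0 + S 1 1 - 2 * S 0 1 + S.det * t := by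
    have : 0 ≤ S.det * t := mul_nonneg hdet.le ht0
    linarith
  set M : Matrix (Fin 2) (Fin 2) ℝ :=
    S⁻¹ + diagonal ![(t + (S 0 0 - S 1 1) / S.det) / 2,
                     (t - (S 0 0 - S 1 1) / S.det) / 2] with hM
  have hMpd : M.PosDef := by
    refine hS.inv.add_posSemidef (Matrix.posSemidef_diagonal_iff.mpr ?_)
    intro i
    fin_cases i
    · simpa using div_nonneg (by linarith) (by norm_num : (0:ℝ) ≤ 2)
    · simpa using div_nonneg (by linarith) (by norm_num : (0:ℝ) ≤ 2)
  have hMdet : IsUnit M.det := isUnit_iff_ne_zero.mpr (ne_of_gt hMpd.det_pos)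
  set k : ℝ := 2 * S.det / (S 0 0 + S 1 1 - 2 * S 0 1 + S.det * t) with hk
  have hSdet : S.det = S 0 0 * S 1 1 - S 0 1 * S 1 0 := Matrix.det_fin_two S
  have hSinv : S⁻¹ = (S.det)⁻¹ • !![S 1 1, -(S 0 1); -(S 1 0), S 0 0] := by
    rw [Matrix.inv_def, Matrix.adjugate_fin_two]
    congr 1
    · simp [Ring.inverse_eq_inv']
  have hMw : M *ᵥ ![k, k] = ![1, 1] := by
    funext i
    fin_cases i <;>
    · simp only [hM, Matrix.add_mulVec, Matrix.mulVec, dotProduct,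
        Fin.sum_univ_two, hSinv, Matrix.smul_apply, Matrix.diagonal_apply,
        Matrix.cons_val_zero, Matrix.cons_val_one, Matrix.head_cons,
        Matrix.of_apply, Pi.add_apply, smul_eq_mul] <;>
      simp [hk, hr] <;>
      field_simp [show S 0 0 + S 1 1 - S 0 1 * 2 + S.det * t ≠ 0 by linarith] <;>
      ring
  have hinv : M⁻¹ *ᵥ ![1, 1] = ![k, k] := by
    rw [← hMw, Matrix.mulVec_mulVec, Matrix.nonsing_inv_mul M hMdet, Matrix.one_mulVec]
  rw [hinv]
  simp [dotProduct, Fin.sum_univ_two, hk]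
  field_simp
  ring
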